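/- Let I ⊆ K[D_1,...,D_r] be the monomial ideal generated by {∏_{i∈I'} D_i^{a_i+1} : I' ⊆ [r], Σ_{i∈I'} a_i = k+1} for an integer k ≥ 0. Then its kernel in K[t_1,...,t_r] is spanned by the monomials ∏_{i∈I'} t_i^{a_i+1} with I' ⊆ [r], a_i ∈ ℕ, and Σ_{i∈I'} a_i ≤ k. -/

import Mathlib

open MvPolynomial

variable {σ K : Type*} [Field K]

/-- The partial derivative `∂/∂t_i` as a linear endomorphism of the polynomial ring. -/
noncomputable def pdEnd (i : σ) : Module.End K (MvPolynomial σ K) :=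
  (pderiv i).toLinearMap

/-- Apply a polynomial `g` as a constant-coefficient differential operator
(`D_i ↦ ∂/∂t_i`) to a polynomial `f`. -/
noncomputable def applyOp (g f : MvPolynomial σ K) : MvPolynomial σ K :=
  ∑ d ∈ g.support, g.coeff d • ((d.support.toList.map fun i => pdEnd i ^ d i).prod f)

/-- The kernel (inverse system) of an ideal `I`: all polynomials annihilated by every
element of `I` acting as a differential operator. -/
def kernelOf (I : Ideal (MvPolynomial σ K)) : Set (MvPolynomial σ K) :=
  {f | ∀ g ∈ I, applyOp g f = 0}

/-! ### Auxiliary machinery -/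

/-- The differential operator associated to a single exponent vector. -/
noncomputable def opD (d : σ →₀ ℕ) : Module.End K (MvPolynomial σ K) :=
  (d.support.toList.map fun i => pdEnd i ^ d i).prod

lemma pdEnd_pow_monomial (i : σ) (n : ℕ) (e : σ →₀ ℕ) (c : K) :
    (pdEnd i ^ n) (monomial e c) =
      monomial (e - Finsupp.single i n) (c * ((e i).descFactorial n : ℕ)) := by
  induction n generalizing e c with
  | zero => simp
  | succ n ih =>
    rw [pow_succ, Module.End.mul_apply]
    have h1 : (pdEnd i : Module.End K (MvPolynomial σ K)) (monomial e c)
        = monomial (e - Finsupp.single i 1) (c * (e i : K)) := by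
      simp [pdEnd, pderiv_monomial]
    rw [h1, ih]
    congr 1
    · rw [tsub_tsub, ← Finsupp.single_add, add_comm]
    · have h2 : (e - Finsupp.single i 1 : σ →₀ ℕ) i = e i - 1 := by
        rw [Finsupp.tsub_apply, Finsupp.single_eq_same]
      rw [h2]
      have h3 : (e i) * (e i - 1).descFactorial n = (e i).descFactorial (n + 1) := by
        cases h : e i with
        | zero => simp
        | succ m => rw [Nat.succ_descFactorial_succ]; simp
      rw [← h3]
      push_cast
      ring

lemma list_sum_single_apply (t : List σ) (n : σ → ℕ) {i : σ} (hi : i ∉ t) :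
    ((t.map fun j => Finsupp.single j (n j)).sum : σ →₀ ℕ) i = 0 := by
  induction t with
  | nil => simp
  | cons j t ih =>
    simp only [List.map_cons, List.sum_cons, Finsupp.add_apply]
    classical
    rw [ih (fun h => hi (List.mem_cons_of_mem _ h)),
      Finsupp.single_apply, if_neg (fun h : j = i => hi (h ▸ List.mem_cons_self))]

lemma listProd_pdEnd_monomial (l : List σ) (hl : l.Nodup) (n : σ → ℕ) (e : σ →₀ ℕ) (c : K) :
    ((l.map fun i => pdEnd i ^ n i).prod : Module.End K (MvPolynomial σ K)) (monomial e c) =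
      monomial (e - (l.map fun i => Finsupp.single i (n i)).sum)
        (c * (((l.map fun i => (e i).descFactorial (n i)).prod : ℕ) : K)) := by
  induction l generalizing e c with
  | nil => simp
  | cons i t ih =>
    obtain ⟨hit, ht⟩ := List.nodup_cons.mp hl
    simp only [List.map_cons, List.prod_cons, List.sum_cons, Module.End.mul_apply]
    rw [ih ht, pdEnd_pow_monomial]
    have hS : ((t.map fun j => Finsupp.single j (n j)).sum : σ →₀ ℕ) i = 0 :=
      list_sum_single_apply t n hit
    congr 1
    · rw [tsub_tsub, add_comm]
    · have h2 : (e - (t.map fun j => Finsupp.single j (n j)).sum : σ →₀ ℕ) i = e i := by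
        rw [Finsupp.tsub_apply, hS, Nat.sub_zero]
      rw [h2]
      push_cast
      ring

lemma opD_monomial (d e : σ →₀ ℕ) (c : K) :
    opD (K := K) d (monomial e c) =
      monomial (e - d) (c * ((∏ i ∈ d.support, (e i).descFactorial (d i) : ℕ) : K)) := by
  rw [opD, listProd_pdEnd_monomial _ d.support.nodup_toList]
  congr 2
  · rw [Finset.sum_map_toList]
    exact congrArg (fun x => e - x) (Finsupp.sum_single d)
  · rw [Finset.prod_map_toList]

lemma applyOp_eq (g f : MvPolynomial σ K) :
    applyOp g f = ∑ d ∈ g.support, g.coeff d • opD d f := rfl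

lemma applyOp_monomial_one (e : σ →₀ ℕ) (f : MvPolynomial σ K) :
    applyOp (monomial e (1 : K)) f = opD e f := by
  classical
  rw [applyOp_eq]
  rw [show (monomial e (1 : K)).support = {e} by rw [support_monomial, if_neg one_ne_zero]]
  simp [coeff_monomial]

lemma prod_X_pow (I' : Finset σ) (a : σ → ℕ) :
    (∏ i ∈ I', (X i : MvPolynomial σ K) ^ (a i + 1)) =
      monomial (∑ i ∈ I', Finsupp.single i (a i + 1)) 1 := by
  classical
  induction I' using Finset.induction with
  | empty => simp
  | insert _ _ h ih =>
    rw [Finset.prod_insert h, Finset.sum_insert h, ih, X_pow_eq_monomial, monomial_mul, one_mul]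

lemma sum_single_apply (I' : Finset σ) (b : σ → ℕ) (j : σ) [DecidableEq σ] :
    (∑ i ∈ I', Finsupp.single i (b i) : σ →₀ ℕ) j = if j ∈ I' then b j else 0 := by
  rw [Finset.sum_apply']
  simp_rw [Finsupp.single_apply]
  exact Finset.sum_ite_eq' I' j b

lemma support_sum_single (I' : Finset σ) (a : σ → ℕ) [DecidableEq σ] :
    (∑ i ∈ I', Finsupp.single i (a i + 1) : σ →₀ ℕ).support = I' := by
  ext j
  rw [Finsupp.mem_support_iff, sum_single_apply]
  split <;> simp_all

lemma exists_le_sum [DecidableEq σ] (s : Finset σ) (c : σ → ℕ) (n : ℕ) (h : n ≤ ∑ i ∈ s, c i) :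
    ∃ b : σ → ℕ, (∀ i, b i ≤ c i) ∧ (∀ i ∉ s, b i = 0) ∧ ∑ i ∈ s, b i = n := by
  induction s using Finset.induction generalizing n with
  | empty =>
    simp only [Finset.sum_empty, Nat.le_zero] at h
    exact ⟨fun _ => 0, fun _ => Nat.zero_le _, fun _ _ => rfl, by simp [h]⟩
  | insert j s hj ih =>
    rw [Finset.sum_insert hj] at h
    obtain ⟨b, hb1, hb2, hb3⟩ := ih (n - min n (c j)) (by omega)
    refine ⟨Function.update b j (min n (c j)), ?_, ?_, ?_⟩
    · intro i
      rcases eq_or_ne i j with rfl | hij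
      · rw [Function.update_self]; omega
      · simpa [Function.update_of_ne hij] using hb1 i
    · intro i hi
      have hij : i ≠ j := fun h' => hi (h' ▸ Finset.mem_insert_self j s)
      rw [Function.update_of_ne hij]
      exact hb2 i (fun h' => hi (Finset.mem_insert_of_mem h'))
    · rw [Finset.sum_insert hj, Function.update_self]
      have : ∑ i ∈ s, Function.update b j (min n (c j)) i = ∑ i ∈ s, b i := by
        apply Finset.sum_congr rfl
        intro i hi
        exact Function.update_of_ne (fun h' : i = j => hj (h' ▸ hi)) _ _
      rw [this, hb3]
      omega

lemma sum_pred_sum_single [DecidableEq σ] (I' : Finset σ) (a : σ → ℕ) :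
    ∑ i ∈ (∑ i ∈ I', Finsupp.single i (a i + 1) : σ →₀ ℕ).support,
      ((∑ i ∈ I', Finsupp.single i (a i + 1) : σ →₀ ℕ) i - 1) = ∑ i ∈ I', a i := by
  rw [support_sum_single]
  refine Finset.sum_congr rfl fun i hi => ?_
  rw [sum_single_apply, if_pos hi]
  omega

lemma E_div [DecidableEq σ] (k : ℕ) (m : σ →₀ ℕ) :
    (∃ e : σ →₀ ℕ, (∃ I' : Finset σ, ∃ a : σ → ℕ, (∑ i ∈ I', a i) = k + 1 ∧
        e = ∑ i ∈ I', Finsupp.single i (a i + 1)) ∧ e ≤ m) ↔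
      k + 1 ≤ ∑ i ∈ m.support, (m i - 1) := by
  constructor
  · rintro ⟨e, ⟨I', a, hsum, rfl⟩, hle⟩
    have hle' : ∀ j, (∑ i ∈ I', Finsupp.single i (a i + 1) : σ →₀ ℕ) j ≤ m j :=
      fun j => Finsupp.le_def.mp hle j
    have hsub : I' ⊆ m.support := by
      intro i hi
      have := hle' i
      rw [sum_single_apply, if_pos hi] at this
      rw [Finsupp.mem_support_iff]
      omega
    calc k + 1 = ∑ i ∈ I', a i := hsum.symm
      _ ≤ ∑ i ∈ I', (m i - 1) := by
          refine Finset.sum_le_sum fun i hi => ?_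
          have := hle' i
          rw [sum_single_apply, if_pos hi] at this
          omega
      _ ≤ ∑ i ∈ m.support, (m i - 1) := Finset.sum_le_sum_of_subset hsub
  · intro h
    obtain ⟨b, hb1, hb2, hb3⟩ := exists_le_sum m.support (fun i => m i - 1) (k + 1) h
    refine ⟨∑ i ∈ m.support, Finsupp.single i (b i + 1), ⟨m.support, b, hb3, rfl⟩, ?_⟩
    rw [Finsupp.le_def]
    intro j
    rw [sum_single_apply]
    split
    · rename_i hj
      rw [Finsupp.mem_support_iff] at hj
      have := hb1 j
      omega
    · exact Nat.zero_le _

/-- The kernel of the monomial ideal generated by `∏_{i∈I'} D_i^{a_i+1}` with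
`∑_{i∈I'} a_i = k+1` is spanned by the monomials `∏_{i∈I'} t_i^{a_i+1}` with
`∑_{i∈I'} a_i ≤ k`. -/
theorem kernel_of_monomial_ideal (K : Type*) [Field K] [CharZero K] (r k : ℕ) :
    kernelOf (Ideal.span {g : MvPolynomial (Fin r) K | ∃ I' : Finset (Fin r),
        ∃ a : Fin r → ℕ, (∑ i ∈ I', a i) = k + 1 ∧ g = ∏ i ∈ I', X i ^ (a i + 1)}) =
      ↑(Submodule.span K {f : MvPolynomial (Fin r) K | ∃ I' : Finset (Fin r),
        ∃ a : Fin r → ℕ, (∑ i ∈ I', a i) ≤ k ∧ f = ∏ i ∈ I', X i ^ (a i + 1)}) := by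
  classical
  set E : Set (Fin r →₀ ℕ) := {e | ∃ I' : Finset (Fin r), ∃ a : Fin r → ℕ,
    (∑ i ∈ I', a i) = k + 1 ∧ e = ∑ i ∈ I', Finsupp.single i (a i + 1)} with hE
  have hSimg : {g : MvPolynomial (Fin r) K | ∃ I' : Finset (Fin r),
      ∃ a : Fin r → ℕ, (∑ i ∈ I', a i) = k + 1 ∧ g = ∏ i ∈ I', X i ^ (a i + 1)} =
      (fun e => monomial e (1 : K)) '' E := by
    ext g
    constructor
    · rintro ⟨I', a, h1, rfl⟩
      exact ⟨∑ i ∈ I', Finsupp.single i (a i + 1), ⟨I', a, h1, rfl⟩, (prod_X_pow I' a).symm⟩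
    · rintro ⟨e, ⟨I', a, h1, rfl⟩, rfl⟩
      exact ⟨I', a, h1, (prod_X_pow I' a).symm⟩
  ext f
  simp only [SetLike.mem_coe]
  constructor
  · intro hf
    have hf' : ∀ g ∈ Ideal.span {g : MvPolynomial (Fin r) K | ∃ I' : Finset (Fin r),
        ∃ a : Fin r → ℕ, (∑ i ∈ I', a i) = k + 1 ∧ g = ∏ i ∈ I', X i ^ (a i + 1)},
        applyOp g f = 0 := hf
    have key : ∀ m ∈ f.support, ∑ i ∈ m.support, (m i - 1) ≤ k := by
      intro m hm
      by_contra hbad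
      push_neg at hbad
      have hbad' : k + 1 ≤ ∑ i ∈ m.support, (m i - 1) := hbad
      obtain ⟨e, heE, hem⟩ := (E_div k m).mpr hbad'
      have hgenmem : monomial e (1 : K) ∈ {g : MvPolynomial (Fin r) K | ∃ I' : Finset (Fin r),
          ∃ a : Fin r → ℕ, (∑ i ∈ I', a i) = k + 1 ∧ g = ∏ i ∈ I', X i ^ (a i + 1)} := by
        rw [hSimg]
        exact ⟨e, heE, rfl⟩
      have h0 := hf' _ (Ideal.subset_span hgenmem)
      rw [applyOp_monomial_one] at h0
      have hcoeff : coeff (m - e) (opD (K := K) e f)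
          = coeff m f * ((∏ i ∈ e.support, (m i).descFactorial (e i) : ℕ) : K) := by
        conv_lhs => rw [f.as_sum, map_sum]
        rw [coeff_sum]
        simp_rw [opD_monomial, coeff_monomial]
        rw [Finset.sum_eq_single m]
        · rw [if_pos rfl]
        · intro v hv hvm
          split
          · rename_i hveq
            have hnle : ¬ e ≤ v := by
              intro hev
              apply hvm
              have h1 := tsub_add_cancel_of_le hev
              have h2 := tsub_add_cancel_of_le hem
              rw [← h1, hveq, h2]
            rw [Finsupp.le_def] at hnle
            push_neg at hnle
            obtain ⟨i, hi⟩ := hnle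
            have hz : (∏ i ∈ e.support, (v i).descFactorial (e i)) = 0 :=
              Finset.prod_eq_zero (Finsupp.mem_support_iff.mpr (by omega))
                (Nat.descFactorial_of_lt hi)
            rw [hz]
            simp
          · rfl
        · intro hms
          exact absurd hm hms
      have hD : ((∏ i ∈ e.support, (m i).descFactorial (e i) : ℕ) : K) ≠ 0 := by
        rw [Nat.cast_ne_zero, Finset.prod_ne_zero_iff]
        intro i _
        rw [Ne, Nat.descFactorial_eq_zero_iff_lt, not_lt]
        exact Finsupp.le_def.mp hem i
      have hne : coeff (m - e) (opD (K := K) e f) ≠ 0 := by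
        rw [hcoeff]
        exact mul_ne_zero (mem_support_iff.mp hm) hD
      rw [h0] at hne
      simp at hne
    rw [f.as_sum]
    apply Submodule.sum_mem
    intro m hm
    have hsm : monomial m (coeff m f) = coeff m f • monomial m (1 : K) := by
      rw [smul_monomial, smul_eq_mul, mul_one]
    rw [hsm]
    apply Submodule.smul_mem
    apply Submodule.subset_span
    refine ⟨m.support, fun i => m i - 1, key m hm, ?_⟩
    have hmeq : (∑ i ∈ m.support, Finsupp.single i (m i - 1 + 1) : Fin r →₀ ℕ) = m := by
      ext j
      rw [sum_single_apply]
      split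
      · rename_i hj
        rw [Finsupp.mem_support_iff] at hj
        omega
      · rename_i hj
        rw [Finsupp.mem_support_iff, not_not] at hj
        omega
    rw [_root_.prod_X_pow, hmeq]
  · intro hf g hg
    have hdiv : ∀ d ∈ g.support, ∃ e ∈ E, e ≤ d := by
      rw [hSimg] at hg
      exact mem_ideal_span_monomial_image.mp hg
    rw [applyOp_eq]
    apply Finset.sum_eq_zero
    intro d hd
    suffices h : opD (K := K) d f = 0 by rw [h, smul_zero]
    have hker : Submodule.span K {f : MvPolynomial (Fin r) K | ∃ I' : Finset (Fin r),
        ∃ a : Fin r → ℕ, (∑ i ∈ I', a i) ≤ k ∧ f = ∏ i ∈ I', X i ^ (a i + 1)}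
        ≤ LinearMap.ker (opD (K := K) d) := by
      rw [Submodule.span_le]
      rintro f0 ⟨I', a, hak, rfl⟩
      rw [SetLike.mem_coe, LinearMap.mem_ker, _root_.prod_X_pow, opD_monomial]
      obtain ⟨e, heE, hed⟩ := hdiv d hd
      set mm : Fin r →₀ ℕ := ∑ i ∈ I', Finsupp.single i (a i + 1) with hmm
      have hgood : ∑ i ∈ mm.support, (mm i - 1) ≤ k := by
        rw [hmm, sum_pred_sum_single]
        exact hak
      have hnle : ¬ d ≤ mm := by
        intro hdm
        have := (E_div k mm).mp ⟨e, heE, le_trans hed hdm⟩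
        omega
      rw [Finsupp.le_def] at hnle
      push_neg at hnle
      obtain ⟨i, hi⟩ := hnle
      have hz : (∏ i ∈ d.support, (mm i).descFactorial (d i)) = 0 :=
        Finset.prod_eq_zero (Finsupp.mem_support_iff.mpr (by omega))
          (Nat.descFactorial_of_lt hi)
      rw [hz]
      simp
    exact LinearMap.mem_ker.mp (hker hf)
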